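/- Let θ₀ ∈ ℝ, Δ ∈ [0, 1/2], B ≥ 1, and let θ̂₁, …, θ̂_B be mutually independent real-valued random variables each having median bias about θ₀ at most Δ. Then P( θ₀ < min_{1≤j≤B} θ̂_j ) + P( θ₀ > max_{1≤j≤B} θ̂_j ) ≤ 2 (1/2 + Δ)^B; in particular P( θ₀ ∉ [min_{1≤j≤B} θ̂_j, max_{1≤j≤B} θ̂_j] ) ≤ 2^{1−B} (1 + 2Δ)^B. -/

import Mathlib

open MeasureTheory ProbabilityTheory

/-- The median bias of a real-valued random variable `X` about a point `θ`:
`(1/2 − min(P(X ≤ θ), P(X ≥ θ)))₊`. -/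
noncomputable def medBias {Ω : Type*} [MeasurableSpace Ω] (P : Measure Ω)
    (X : Ω → ℝ) (θ : ℝ) : ℝ :=
  max (1 / 2 - min (P {ω | X ω ≤ θ}).toReal (P {ω | θ ≤ X ω}).toReal) 0

lemma aux_lt_iInf {B : ℕ} (hB : 1 ≤ B) (f : Fin B → ℝ) (a : ℝ) :
    a < ⨅ j, f j ↔ ∀ j, a < f j := by
  have : Nonempty (Fin B) := ⟨⟨0, hB⟩⟩
  constructor
  · intro h j
    exact lt_of_lt_of_le h (ciInf_le (Set.finite_range f).bddBelow j)
  · intro h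
    obtain ⟨i, hi⟩ := Finite.exists_min f
    exact lt_of_lt_of_le (h i) (le_ciInf hi)

lemma aux_iSup_lt {B : ℕ} (hB : 1 ≤ B) (f : Fin B → ℝ) (a : ℝ) :
    (⨆ j, f j) < a ↔ ∀ j, f j < a := by
  have : Nonempty (Fin B) := ⟨⟨0, hB⟩⟩
  constructor
  · intro h j
    exact lt_of_le_of_lt (le_ciSup (Set.finite_range f).bddAbove j) h
  · intro h
    obtain ⟨i, hi⟩ := Finite.exists_max f
    exact lt_of_le_of_lt (ciSup_le hi) (h i)

/-- If `θ̂₁, …, θ̂_B` are mutually independent with median bias about `θ₀`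
at most `Δ`, then `P(θ₀ < min θ̂_j) + P(θ₀ > max θ̂_j) ≤ 2(1/2 + Δ)^B`, so
`P(θ₀ ∉ [min θ̂_j, max θ̂_j]) ≤ 2^{1−B}(1 + 2Δ)^B`. -/
theorem hulc_miscoverage_bound {Ω : Type*} [MeasurableSpace Ω]
    (P : Measure Ω) [IsProbabilityMeasure P]
    (θ₀ Δ : ℝ) (hΔ0 : 0 ≤ Δ) (hΔhalf : Δ ≤ 1 / 2)
    (B : ℕ) (hB : 1 ≤ B)
    (θh : Fin B → Ω → ℝ) (hmeas : ∀ j, Measurable (θh j))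
    (hindep : iIndepFun θh P)
    (hbias : ∀ j, medBias P (θh j) θ₀ ≤ Δ) :
    (P {ω | θ₀ < ⨅ j, θh j ω}).toReal + (P {ω | (⨆ j, θh j ω) < θ₀}).toReal ≤
        2 * (1 / 2 + Δ) ^ B ∧
      (P {ω | θ₀ ∉ Set.Icc (⨅ j, θh j ω) (⨆ j, θh j ω)}).toReal ≤
        (2 : ℝ) ^ ((1 : ℤ) - (B : ℤ)) * (1 + 2 * Δ) ^ B := by
  have hne : Nonempty (Fin B) := ⟨⟨0, hB⟩⟩
  -- key pointwise bounds on each variable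
  have hbound1 : ∀ j, (P {ω | θ₀ < θh j ω}).toReal ≤ 1 / 2 + Δ := by
    intro j
    have hb := hbias j
    have hmin : 1 / 2 - Δ ≤ (P {ω | θh j ω ≤ θ₀}).toReal := by
      have h1 : 1 / 2 - min (P {ω | θh j ω ≤ θ₀}).toReal (P {ω | θ₀ ≤ θh j ω}).toReal ≤ Δ :=
        le_trans (le_max_left _ _) hb
      have := min_le_left (P {ω | θh j ω ≤ θ₀}).toReal (P {ω | θ₀ ≤ θh j ω}).toReal
      linarith
    have hcompl : {ω | θ₀ < θh j ω} = {ω | θh j ω ≤ θ₀}ᶜ := by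
      ext ω; simp [not_le]
    have hms : MeasurableSet {ω | θh j ω ≤ θ₀} := (hmeas j) measurableSet_Iic
    rw [hcompl, prob_compl_eq_one_sub hms]
    rw [ENNReal.toReal_sub_of_le (prob_le_one) (by simp)]
    simp only [ENNReal.toReal_one]
    linarith
  have hbound2 : ∀ j, (P {ω | θh j ω < θ₀}).toReal ≤ 1 / 2 + Δ := by
    intro j
    have hb := hbias j
    have hmin : 1 / 2 - Δ ≤ (P {ω | θ₀ ≤ θh j ω}).toReal := by
      have h1 : 1 / 2 - min (P {ω | θh j ω ≤ θ₀}).toReal (P {ω | θ₀ ≤ θh j ω}).toReal ≤ Δ :=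
        le_trans (le_max_left _ _) hb
      have := min_le_right (P {ω | θh j ω ≤ θ₀}).toReal (P {ω | θ₀ ≤ θh j ω}).toReal
      linarith
    have hcompl : {ω | θh j ω < θ₀} = {ω | θ₀ ≤ θh j ω}ᶜ := by
      ext ω; simp [not_le]
    have hms : MeasurableSet {ω | θ₀ ≤ θh j ω} := (hmeas j) measurableSet_Ici
    rw [hcompl, prob_compl_eq_one_sub hms]
    rw [ENNReal.toReal_sub_of_le (prob_le_one) (by simp)]
    simp only [ENNReal.toReal_one]
    linarith
  -- rewrite the two events as intersections
  have hset1 : {ω | θ₀ < ⨅ j, θh j ω} = ⋂ j, {ω | θ₀ < θh j ω} := by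
    ext ω; simp [aux_lt_iInf hB (fun j => θh j ω)]
  have hset2 : {ω | (⨆ j, θh j ω) < θ₀} = ⋂ j, {ω | θh j ω < θ₀} := by
    ext ω; simp [aux_iSup_lt hB (fun j => θh j ω)]
  have hprod1 : P (⋂ j, {ω | θ₀ < θh j ω}) = ∏ j, P {ω | θ₀ < θh j ω} := by
    refine hindep.meas_iInter fun j => ?_
    exact ⟨Set.Ioi θ₀, measurableSet_Ioi, rfl⟩
  have hprod2 : P (⋂ j, {ω | θh j ω < θ₀}) = ∏ j, P {ω | θh j ω < θ₀} := by
    refine hindep.meas_iInter fun j => ?_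
    exact ⟨Set.Iio θ₀, measurableSet_Iio, rfl⟩
  have hT1 : (P {ω | θ₀ < ⨅ j, θh j ω}).toReal ≤ (1 / 2 + Δ) ^ B := by
    rw [hset1, hprod1, ENNReal.toReal_prod]
    calc ∏ j, (P {ω | θ₀ < θh j ω}).toReal ≤ ∏ _j : Fin B, (1 / 2 + Δ) :=
          Finset.prod_le_prod (fun j _ => ENNReal.toReal_nonneg) (fun j _ => hbound1 j)
      _ = (1 / 2 + Δ) ^ B := by simp
  have hT2 : (P {ω | (⨆ j, θh j ω) < θ₀}).toReal ≤ (1 / 2 + Δ) ^ B := by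
    rw [hset2, hprod2, ENNReal.toReal_prod]
    calc ∏ j, (P {ω | θh j ω < θ₀}).toReal ≤ ∏ _j : Fin B, (1 / 2 + Δ) :=
          Finset.prod_le_prod (fun j _ => ENNReal.toReal_nonneg) (fun j _ => hbound2 j)
      _ = (1 / 2 + Δ) ^ B := by simp
  have hfirst : (P {ω | θ₀ < ⨅ j, θh j ω}).toReal + (P {ω | (⨆ j, θh j ω) < θ₀}).toReal ≤
      2 * (1 / 2 + Δ) ^ B := by linarith
  refine ⟨hfirst, ?_⟩
  have hsub : {ω | θ₀ ∉ Set.Icc (⨅ j, θh j ω) (⨆ j, θh j ω)} ⊆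
      {ω | θ₀ < ⨅ j, θh j ω} ∪ {ω | (⨆ j, θh j ω) < θ₀} := by
    intro ω hω
    simp only [Set.mem_setOf_eq, Set.mem_Icc, not_and_or, not_le] at hω
    rcases hω with h | h
    · exact Or.inl h
    · exact Or.inr h
  have hP : (P {ω | θ₀ ∉ Set.Icc (⨅ j, θh j ω) (⨆ j, θh j ω)}).toReal ≤
      (P {ω | θ₀ < ⨅ j, θh j ω}).toReal + (P {ω | (⨆ j, θh j ω) < θ₀}).toReal := by
    have h1 : P {ω | θ₀ ∉ Set.Icc (⨅ j, θh j ω) (⨆ j, θh j ω)} ≤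
        P {ω | θ₀ < ⨅ j, θh j ω} + P {ω | (⨆ j, θh j ω) < θ₀} :=
      le_trans (measure_mono hsub) (measure_union_le _ _)
    have := ENNReal.toReal_mono (by finiteness) h1
    rwa [ENNReal.toReal_add (measure_ne_top _ _) (measure_ne_top _ _)] at this
  have heq : (2 : ℝ) ^ ((1 : ℤ) - (B : ℤ)) * (1 + 2 * Δ) ^ B = 2 * (1 / 2 + Δ) ^ B := by
    rw [zpow_sub₀ (by norm_num : (2:ℝ) ≠ 0), zpow_one, zpow_natCast]
    have : (1 + 2 * Δ) ^ B = 2 ^ B * (1 / 2 + Δ) ^ B := by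
      rw [← mul_pow]; ring_nf
    rw [this]
    field_simp
  rw [heq]
  linarith
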